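/- Suppose d_ϱ < ∞ and μ is a C-uniform Borel probability measure on Ω with parameters C > 0, ε_0 > 0 (i.e. μ({y ∈ Ω : ϱ(x,y) ≤ ε'}) ≥ C(ε')^{d_ϱ} for all x ∈ Ω and ε' ∈ (0,ε_0)). Let ε ∈ (0,ε_0), δ ∈ (0,1), and Z_1,…,Z_N i.i.d. with law μ with N ≥ (log N(ε,Ω,ϱ) + log(1/δ))/(C ε^{d_ϱ}). Then with probability at least 1 − δ the following holds simultaneously for every t ≥ 0 and every choice of points x_1,…,x_t ∈ {Z_1,…,Z_N} whose Gram matrix G = [K(x_i,x_j)]_{i,j=1}^t is invertible: max_{1≤i≤N} √(S_t(Z_i)) ≥ w_K(t) − 2ε, where S_t(x) = K(x,x) − v(x)ᵀG⁻¹v(x), v(x) = (K(x_1,x),…,K(x_t,x))ᵀ, and S_0(x) = K(x,x). In particular, the outputs w_0,…,w_{T−1} of the greedy n-width algorithm run on the sample satisfy w_t ≥ w_K(t) − 2ε for all t with probability at least 1 − δ. -/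

import Mathlib

open MeasureTheory Filter
open scoped ENNReal

noncomputable section

/-- The Kolmogorov `n`-width of the image of `Ω` under `Φ` in the Hilbert space `H`. -/
def kolmWidth {E H : Type*} [NormedAddCommGroup H] [InnerProductSpace ℝ H]
    (Ω : Set E) (Φ : E → H) (n : ℕ) : ℝ :=
  ⨅ L : {L : Submodule ℝ H // ∃ s : Finset H, s.card ≤ n ∧ L = Submodule.span ℝ (s : Set H)},
    ⨆ x : Ω, Metric.infDist (Φ (x : E)) (L.1 : Set H)

/-- The Gram matrix `[K(x_i,x_j)]` of the points `x : Fin n → E`. -/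
def gramM {E H : Type*} [NormedAddCommGroup H] [InnerProductSpace ℝ H]
    (Φ : E → H) {n : ℕ} (x : Fin n → E) : Matrix (Fin n) (Fin n) ℝ :=
  Matrix.of fun i j => (inner ℝ (Φ (x i)) (Φ (x j)) : ℝ)

/-- The vector `v(y) = (K(x_1,y), …, K(x_n,y))`. -/
def kvec {E H : Type*} [NormedAddCommGroup H] [InnerProductSpace ℝ H]
    (Φ : E → H) {n : ℕ} (x : Fin n → E) (y : E) : Fin n → ℝ :=
  fun i => (inner ℝ (Φ (x i)) (Φ y) : ℝ)

/-- `S_t(y) = K(y,y) − v(y)ᵀ G⁻¹ v(y)`; for `t = 0` this is `S_0(y) = K(y,y)`. -/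
def Sfun {E H : Type*} [NormedAddCommGroup H] [InnerProductSpace ℝ H]
    (Φ : E → H) {n : ℕ} (x : Fin n → E) (y : E) : ℝ :=
  (inner ℝ (Φ y) (Φ y) : ℝ) -
    dotProduct (kvec Φ x y) (Matrix.mulVec (gramM Φ x)⁻¹ (kvec Φ x y))

/-- The `ε`-covering number of `(Ω, ϱ)`. -/
def covN {E : Type*} (Ω : Set E) (ϱ : E → E → ℝ) (ε : ℝ) : ℕ :=
  sInf {M : ℕ | ∃ z : Fin M → E, (∀ i, z i ∈ Ω) ∧ ∀ x ∈ Ω, ∃ i, ϱ x (z i) ≤ ε}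

/-- The kernel-based upper metric dimension `d_ϱ`. -/
def metricDim {E : Type*} (Ω : Set E) (ϱ : E → E → ℝ) : ℝ≥0∞ :=
  Filter.limsup (fun ε : ℝ => ENNReal.ofReal (Real.log (covN Ω ϱ ε) / Real.log (1 / ε)))
    (nhdsWithin 0 (Set.Ioi 0))

open Matrix in
/-- `S_t(y)` is the squared distance from `Φ y` to the span of the `Φ (x i)`,
computed via the explicit projection, when the Gram matrix is invertible. -/
lemma sfun_eq_norm_sq {E H : Type*} [NormedAddCommGroup H] [InnerProductSpace ℝ H]
    (Φ : E → H) {n : ℕ} (x : Fin n → E) (y : E)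
    (hdet : IsUnit (gramM Φ x).det) :
    Sfun Φ x y =
      ‖Φ y - ∑ i, ((gramM Φ x)⁻¹ *ᵥ kvec Φ x y) i • Φ (x i)‖ ^ 2 := by
  set G := gramM Φ x with hG
  set v := kvec Φ x y with hv
  set c := G⁻¹ *ᵥ v with hc
  have hGc : G *ᵥ c = v := by
    rw [hc, Matrix.mulVec_mulVec, Matrix.mul_nonsing_inv _ hdet, Matrix.one_mulVec]
  have hwp : ∀ w : H, (inner ℝ w (∑ i, c i • Φ (x i)) : ℝ)
      = ∑ j, (inner ℝ w (Φ (x j)) : ℝ) * c j := by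
    intro w
    rw [inner_sum]
    exact Finset.sum_congr rfl fun j _ => by rw [real_inner_smul_right]; ring
  have hyp : (inner ℝ (Φ y) (∑ i, c i • Φ (x i)) : ℝ) = ∑ j, v j * c j := by
    rw [hwp]
    exact Finset.sum_congr rfl fun j _ => by
      rw [hv]; unfold kvec; rw [real_inner_comm]
  have hpp : (inner ℝ (∑ i, c i • Φ (x i)) (∑ i, c i • Φ (x i)) : ℝ)
      = ∑ j, v j * c j := by
    rw [sum_inner]
    have h : ∀ i ∈ Finset.univ, (inner ℝ (c i • Φ (x i)) (∑ j, c j • Φ (x j)) : ℝ)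
        = v i * c i := by
      intro i _
      rw [real_inner_smul_left, hwp]
      have h2 : ∑ j, (inner ℝ (Φ (x i)) (Φ (x j)) : ℝ) * c j = (G *ᵥ c) i := by
        simp [hG, gramM, Matrix.mulVec, dotProduct]
      rw [h2, hGc]; ring
    rw [Finset.sum_congr rfl h]
  have hnorm : ‖Φ y - ∑ i, c i • Φ (x i)‖ ^ 2
      = ‖Φ y‖ ^ 2 - 2 * (inner ℝ (Φ y) (∑ i, c i • Φ (x i)) : ℝ)
        + ‖∑ i, c i • Φ (x i)‖ ^ 2 := norm_sub_sq_real _ _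
  have hyy : (inner ℝ (Φ y) (Φ y) : ℝ) = ‖Φ y‖ ^ 2 := real_inner_self_eq_norm_sq _
  have hppn : ‖∑ i, c i • Φ (x i)‖ ^ 2 = ∑ j, v j * c j := by
    rw [← real_inner_self_eq_norm_sq]; exact hpp
  have hS : Sfun Φ x y = (inner ℝ (Φ y) (Φ y) : ℝ) - ∑ j, v j * c j := by
    unfold Sfun
    rw [← hv, ← hG, ← hc]
    simp [dotProduct]
  rw [hS, hnorm, hyp, hppn, hyy]; ring

theorem c_uniform_greedy_lower_bound {d : ℕ} {H : Type*}
    [NormedAddCommGroup H] [InnerProductSpace ℝ H]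
    (Ω : Set (EuclideanSpace ℝ (Fin d))) (hΩ : IsCompact Ω) (hne : Ω.Nonempty)
    (Φ : EuclideanSpace ℝ (Fin d) → H) (hΦ : ContinuousOn Φ Ω)
    (dρ : ℝ) (hfin : metricDim Ω (fun x y => ‖Φ x - Φ y‖) ≠ ⊤)
    (hdρ : dρ = (metricDim Ω (fun x y => ‖Φ x - Φ y‖)).toReal)
    (μ : Measure (EuclideanSpace ℝ (Fin d))) [IsProbabilityMeasure μ] (hμΩ : μ Ωᶜ = 0)
    (C ε₀ : ℝ) (hC : 0 < C) (hε₀ : 0 < ε₀)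
    (hunif : ∀ x ∈ Ω, ∀ ε' ∈ Set.Ioo (0 : ℝ) ε₀,
      C * ε' ^ dρ ≤ (μ {y | y ∈ Ω ∧ ‖Φ x - Φ y‖ ≤ ε'}).toReal)
    (ε δ : ℝ) (hε : ε ∈ Set.Ioo (0 : ℝ) ε₀) (hδ : δ ∈ Set.Ioo (0 : ℝ) 1)
    (N : ℕ)
    (hN : (Real.log (covN Ω (fun x y => ‖Φ x - Φ y‖) ε) + Real.log (1 / δ)) /
        (C * ε ^ dρ) ≤ N) :
    ENNReal.ofReal (1 - δ) ≤
      Measure.pi (fun _ : Fin N => μ)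
        {z : Fin N → EuclideanSpace ℝ (Fin d) |
          ∀ (t : ℕ) (x : Fin t → EuclideanSpace ℝ (Fin d)),
            (∀ i, ∃ j, x i = z j) → IsUnit (gramM Φ x).det →
            ∃ i : Fin N, kolmWidth Ω Φ t - 2 * ε ≤ Real.sqrt (Sfun Φ x (z i))} := by
  classical
  have hε1 : 0 < ε := hε.1
  have hδ0 : 0 < δ := hδ.1
  set c0 : ℝ := C * ε ^ dρ with hc0
  have hc0pos : 0 < c0 := mul_pos hC (Real.rpow_pos_of_pos hε1 dρ)
  -- existence of a finite ε-cover with centers in Ω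
  have himg : IsCompact (Φ '' Ω) := hΩ.image_of_continuousOn hΦ
  have hcover : Φ '' Ω ⊆ ⋃ c ∈ Ω, Metric.ball (Φ c) ε := by
    rintro _ ⟨a, ha, rfl⟩
    exact Set.mem_biUnion ha (Metric.mem_ball_self hε1)
  obtain ⟨b', hb'Ω, hb'fin, hb'cov⟩ :=
    himg.elim_finite_subcover_image (fun c _ => Metric.isOpen_ball) hcover
  have hSne : (Set.Nonempty {M : ℕ | ∃ z : Fin M → EuclideanSpace ℝ (Fin d),
      (∀ i, z i ∈ Ω) ∧ ∀ x ∈ Ω, ∃ i, ‖Φ x - Φ (z i)‖ ≤ ε}) := by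
    refine ⟨hb'fin.toFinset.card,
      fun i => ((hb'fin.toFinset.equivFin.symm i : hb'fin.toFinset) : _), ?_, ?_⟩
    · intro i
      exact hb'Ω (hb'fin.mem_toFinset.1 (hb'fin.toFinset.equivFin.symm i).2)
    · intro a ha
      obtain ⟨c, hc, hdist⟩ := Set.mem_iUnion₂.1 (hb'cov ⟨a, ha, rfl⟩)
      refine ⟨hb'fin.toFinset.equivFin ⟨c, hb'fin.mem_toFinset.2 hc⟩, ?_⟩
      simp only [Equiv.symm_apply_apply]
      rw [Metric.mem_ball, dist_eq_norm] at hdist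
      exact hdist.le
  set M : ℕ := covN Ω (fun x y => ‖Φ x - Φ y‖) ε with hMdef
  have hM : M ∈ {M : ℕ | ∃ z : Fin M → EuclideanSpace ℝ (Fin d),
      (∀ i, z i ∈ Ω) ∧ ∀ x ∈ Ω, ∃ i, ‖Φ x - Φ (z i)‖ ≤ ε} := Nat.sInf_mem hSne
  obtain ⟨cs, hcsΩ, hcscov⟩ := hM
  have hM1 : 0 < M := by
    obtain ⟨a, ha⟩ := hne
    obtain ⟨i, -⟩ := hcscov a ha
    exact i.pos
  have hMpos : (0 : ℝ) < M := by exact_mod_cast hM1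
  have hlogM : 0 ≤ Real.log M := Real.log_nonneg (by exact_mod_cast hM1)
  have hlogδ : 0 < Real.log (1 / δ) := Real.log_pos (by rw [lt_div_iff₀ hδ0, one_mul]; exact hδ.2)
  have hNpos : 0 < N := by
    have h0 : (0 : ℝ) < (Real.log M + Real.log (1 / δ)) / c0 := div_pos (by linarith) hc0pos
    exact_mod_cast Nat.cast_pos.mp (lt_of_lt_of_le h0 hN)
  have hNC : Real.log M + Real.log (1 / δ) ≤ c0 * N := by
    rw [div_le_iff₀ hc0pos] at hN
    calc Real.log M + Real.log (1 / δ) ≤ (N : ℝ) * c0 := hN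
      _ = c0 * N := mul_comm _ _
  have hexp : (M : ℝ) * Real.exp (-(c0 * N)) ≤ δ := by
    have h1 : Real.exp (-(c0 * N)) ≤ Real.exp (-(Real.log M + Real.log (1 / δ))) :=
      Real.exp_le_exp.2 (by linarith)
    have h2 : Real.exp (-(Real.log M + Real.log (1 / δ))) = (M : ℝ)⁻¹ * δ := by
      rw [neg_add, Real.exp_add, Real.exp_neg, Real.exp_neg, Real.exp_log hMpos,
        Real.exp_log (by positivity : (0:ℝ) < 1 / δ), one_div, inv_inv]
    calc (M : ℝ) * Real.exp (-(c0 * N)) ≤ (M : ℝ) * ((M : ℝ)⁻¹ * δ) := by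
          refine mul_le_mul_of_nonneg_left ?_ (Nat.cast_nonneg M)
          rw [← h2]; exact h1
      _ = δ := by field_simp
  -- the balls
  set B : Fin M → Set (EuclideanSpace ℝ (Fin d)) :=
    fun k => {y | y ∈ Ω ∧ ‖Φ (cs k) - Φ y‖ ≤ ε} with hB
  have hBclosed : ∀ k, IsClosed (B k) := by
    intro k
    have heq : B k = Ω ∩ (fun y => ‖Φ (cs k) - Φ y‖) ⁻¹' (Set.Iic ε) := by
      ext y; simp [hB, Set.mem_setOf_eq]
    rw [heq]
    exact ContinuousOn.preimage_isClosed_of_isClosed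
      ((continuousOn_const.sub hΦ).norm) hΩ.isClosed isClosed_Iic
  have hμB : ∀ k, ENNReal.ofReal c0 ≤ μ (B k) := fun k =>
    ENNReal.ofReal_le_of_le_toReal (hunif (cs k) (hcsΩ k) ε hε)
  have hμBc : ∀ k, μ (B k)ᶜ ≤ ENNReal.ofReal (Real.exp (-c0)) := by
    intro k
    rw [prob_compl_eq_one_sub (hBclosed k).measurableSet]
    have h1 : (1 : ℝ≥0∞) - μ (B k) ≤ 1 - ENNReal.ofReal c0 := tsub_le_tsub_left (hμB k) 1
    have h2 : (1 : ℝ≥0∞) - ENNReal.ofReal c0 = ENNReal.ofReal (1 - c0) := by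
      rw [← ENNReal.ofReal_one, ← ENNReal.ofReal_sub _ hc0pos.le]
    refine h1.trans (h2.le.trans (ENNReal.ofReal_le_ofReal ?_))
    have := Real.add_one_le_exp (-c0); linarith
  set A : Fin M → Set (Fin N → EuclideanSpace ℝ (Fin d)) :=
    fun k => Set.pi Set.univ (fun _ => (B k)ᶜ) with hA
  set P : Measure (Fin N → EuclideanSpace ℝ (Fin d)) := Measure.pi (fun _ : Fin N => μ) with hP
  have hPA : ∀ k, P (A k) ≤ ENNReal.ofReal (Real.exp (-(c0 * N))) := by
    intro k
    rw [hP, hA]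
    rw [Measure.pi_pi]
    calc (∏ _i : Fin N, μ (B k)ᶜ) = (μ (B k)ᶜ) ^ N := by
          rw [Finset.prod_const, Finset.card_univ, Fintype.card_fin]
      _ ≤ (ENNReal.ofReal (Real.exp (-c0))) ^ N := pow_le_pow_left' (hμBc k) N
      _ = ENNReal.ofReal ((Real.exp (-c0)) ^ N) := (ENNReal.ofReal_pow (Real.exp_nonneg _) N).symm
      _ = ENNReal.ofReal (Real.exp (-(c0 * N))) := by
          rw [← Real.exp_nat_mul]; congr 1; ring
  have hPU : P (⋃ k, A k) ≤ ENNReal.ofReal δ := by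
    calc P (⋃ k, A k) ≤ ∑' k, P (A k) := measure_iUnion_le _
      _ = ∑ k, P (A k) := tsum_fintype _
      _ ≤ ∑ _k : Fin M, ENNReal.ofReal (Real.exp (-(c0 * N))) :=
          Finset.sum_le_sum fun k _ => hPA k
      _ = (M : ℝ≥0∞) * ENNReal.ofReal (Real.exp (-(c0 * N))) := by
          rw [Finset.sum_const, Finset.card_univ, Fintype.card_fin, nsmul_eq_mul]
      _ = ENNReal.ofReal ((M : ℝ) * Real.exp (-(c0 * N))) := by
          rw [← ENNReal.ofReal_natCast M, ← ENNReal.ofReal_mul (Nat.cast_nonneg M)]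
      _ ≤ ENNReal.ofReal δ := ENNReal.ofReal_le_ofReal hexp
  -- deterministic part
  have hsub : (⋃ k, A k)ᶜ ⊆
      {z : Fin N → EuclideanSpace ℝ (Fin d) |
        ∀ (t : ℕ) (x : Fin t → EuclideanSpace ℝ (Fin d)),
          (∀ i, ∃ j, x i = z j) → IsUnit (gramM Φ x).det →
          ∃ i : Fin N, kolmWidth Ω Φ t - 2 * ε ≤ Real.sqrt (Sfun Φ x (z i))} := by
    intro z hz
    have hz' : ∀ k, ∃ i, z i ∈ B k := by
      intro k
      by_contra hcon
      push_neg at hcon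
      exact hz (Set.mem_iUnion.2 ⟨k, fun i _ => hcon i⟩)
    intro t x hx hdet
    set s : Finset H := Finset.image (fun i => Φ (x i)) Finset.univ with hs
    set L : Submodule ℝ H := Submodule.span ℝ (s : Set H) with hLdef
    have hdist : ∀ y : EuclideanSpace ℝ (Fin d),
        Metric.infDist (Φ y) (L : Set H) ≤ Real.sqrt (Sfun Φ x y) := by
      intro y
      have h1 := sfun_eq_norm_sq Φ x y hdet
      set p := ∑ i, (Matrix.mulVec (gramM Φ x)⁻¹ (kvec Φ x y)) i • Φ (x i) with hpd
      have hpL : p ∈ L := by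
        refine Submodule.sum_mem _ fun i _ => Submodule.smul_mem _ _ (Submodule.subset_span ?_)
        simp [hs]
      calc Metric.infDist (Φ y) (L : Set H) ≤ dist (Φ y) p :=
            Metric.infDist_le_dist_of_mem hpL
        _ = ‖Φ y - p‖ := dist_eq_norm _ _
        _ = Real.sqrt (Sfun Φ x y) := by rw [h1, Real.sqrt_sq (norm_nonneg _)]
    have : Nonempty (Fin N) := ⟨⟨0, hNpos⟩⟩
    obtain ⟨i0, -, hi0⟩ := Finset.exists_max_image Finset.univ
      (fun i => Real.sqrt (Sfun Φ x (z i))) Finset.univ_nonempty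
    refine ⟨i0, ?_⟩
    rw [sub_le_iff_le_add]
    have hbdd : BddBelow (Set.range fun L' :
        {L' : Submodule ℝ H // ∃ s' : Finset H, s'.card ≤ t ∧ L' = Submodule.span ℝ (s' : Set H)} =>
        ⨆ a : Ω, Metric.infDist (Φ (a : EuclideanSpace ℝ (Fin d))) (L'.1 : Set H)) := by
      refine ⟨0, ?_⟩
      rintro r ⟨L', rfl⟩
      exact Real.iSup_nonneg fun _ => Metric.infDist_nonneg
    have hcard : s.card ≤ t := Finset.card_image_le.trans (by simp)
    have hkolm : kolmWidth Ω Φ t ≤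
        ⨆ a : Ω, Metric.infDist (Φ (a : EuclideanSpace ℝ (Fin d))) (L : Set H) :=
      ciInf_le hbdd ⟨L, s, hcard, hLdef⟩
    refine hkolm.trans ?_
    have : Nonempty Ω := hne.to_subtype
    refine ciSup_le fun a => ?_
    obtain ⟨k, hk⟩ := hcscov a a.2
    obtain ⟨i, hiB⟩ := hz' k
    have htri : dist (Φ (a : EuclideanSpace ℝ (Fin d))) (Φ (z i)) ≤ 2 * ε := by
      calc dist (Φ (a : EuclideanSpace ℝ (Fin d))) (Φ (z i))
          ≤ dist (Φ (a : EuclideanSpace ℝ (Fin d))) (Φ (cs k)) + dist (Φ (cs k)) (Φ (z i)) :=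
            dist_triangle _ _ _
        _ ≤ ε + ε := add_le_add (by rw [dist_eq_norm]; exact hk)
            (by rw [dist_eq_norm]; exact hiB.2)
        _ = 2 * ε := by ring
    calc Metric.infDist (Φ (a : EuclideanSpace ℝ (Fin d))) (L : Set H)
        ≤ Metric.infDist (Φ (z i)) (L : Set H)
          + dist (Φ (a : EuclideanSpace ℝ (Fin d))) (Φ (z i)) :=
          Metric.infDist_le_infDist_add_dist
      _ ≤ Real.sqrt (Sfun Φ x (z i)) + 2 * ε := add_le_add (hdist _) htri
      _ ≤ Real.sqrt (Sfun Φ x (z i0)) + 2 * ε := by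
          have := hi0 i (Finset.mem_univ i); linarith
  calc ENNReal.ofReal (1 - δ) = 1 - ENNReal.ofReal δ := by
        rw [← ENNReal.ofReal_one, ← ENNReal.ofReal_sub _ hδ0.le]
    _ ≤ 1 - P (⋃ k, A k) := tsub_le_tsub_left hPU 1
    _ ≤ P ((⋃ k, A k)ᶜ) := by
        rw [tsub_le_iff_right]
        calc (1 : ℝ≥0∞) = P Set.univ := measure_univ.symm
          _ = P ((⋃ k, A k)ᶜ ∪ (⋃ k, A k)) := by rw [Set.compl_union_self]
          _ ≤ P ((⋃ k, A k)ᶜ) + P (⋃ k, A k) := measure_union_le _ _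
    _ ≤ _ := measure_mono hsub

end
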